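/- In U_E(λ) (char F ≠ 2, λ ∉ {0,1}, δ = 1 − λ), the nonzero idempotents are exactly the elements a + z with a ∈ E fixed and z ∈ span{e − a : e ∈ E}; equivalently, an element νa + z (z in the span of {e − a : e ∈ E}) is a nonzero idempotent if and only if ν = 1. -/

import Mathlib

/-- In `U_E(λ)`, the nonzero idempotents are exactly the elements `a + z` with
`z ∈ Z = span{e i - a}`; equivalently `ν • a + z` (with `z ∈ Z`) is a nonzero idempotent
iff `ν = 1`. -/
theorem stmt2 {F A I : Type*} [Field F] [NonUnitalNonAssocRing A] [Module F A]
    [SMulCommClass F A A] [IsScalarTower F A A]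
    (hchar : (2 : F) ≠ 0) (lam : F) (hl0 : lam ≠ 0) (hl1 : lam ≠ 1)
    (e : I → A) (hindep : LinearIndependent F e)
    (hspan : Submodule.span F (Set.range e) = ⊤)
    (hmul : ∀ i j, e i * e j = (1 - lam) • e i + lam • e j)
    (i0 : I) :
    ∀ Z : Submodule F A, Z = Submodule.span F {x : A | ∃ i, x = e i - e i0} →
      ({u : A | u * u = u ∧ u ≠ 0} = {u : A | ∃ z ∈ Z, u = e i0 + z}) ∧
      (∀ (ν : F), ∀ z ∈ Z,
        ((ν • e i0 + z) * (ν • e i0 + z) = ν • e i0 + z ∧ ν • e i0 + z ≠ 0) ↔ ν = 1) := by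
  intro Z hZ
  let b : Module.Basis I F A := Module.Basis.mk hindep (by rw [hspan])
  have hb : ∀ i, b i = e i := fun i => Module.Basis.mk_apply hindep _ i
  let s : A →ₗ[F] F := (Finsupp.linearCombination F (fun _ : I => (1:F))).comp b.repr.toLinearMap
  have hse : ∀ i, s (e i) = 1 := by
    intro i
    simp [s, ← hb, Finsupp.linearCombination_single]
  -- key bilinear identity
  let M2 : A →ₗ[F] A →ₗ[F] A := LinearMap.mk₂ F
    (fun u v => ((1 - lam) * s v) • u + (lam * s u) • v)
    (by intro u u' v; simp [map_add]; module)
    (by intro c u v; simp [map_smul]; module)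
    (by intro u v v'; simp [map_add]; module)
    (by intro c u v; simp [map_smul]; module)
  have hM : (LinearMap.mul F A) = M2 := by
    refine b.ext fun i => b.ext fun j => ?_
    simp [hb, M2, hse, hmul i j]
  have key : ∀ u v : A, u * v = ((1 - lam) * s v) • u + (lam * s u) • v := by
    intro u v
    have := LinearMap.congr_fun (LinearMap.congr_fun hM u) v
    simpa [M2] using this
  have square : ∀ u : A, u * u = s u • u := by
    intro u
    rw [key]
    match_scalars
    ring
  have hZ0 : ∀ z ∈ Z, s z = 0 := by
    have hle : Z ≤ LinearMap.ker s := by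
      rw [hZ, Submodule.span_le]
      rintro x ⟨i, rfl⟩
      simp [LinearMap.mem_ker, map_sub, hse]
    intro z hz
    exact hle hz
  have hker : ∀ u : A, s u = 0 → u ∈ Z := by
    intro u hu
    have h1 : (b.repr u).sum (fun i c => c • e i) = u := by
      have := b.linearCombination_repr u
      rw [Finsupp.linearCombination_apply] at this
      simpa [hb] using this
    have hsu : (b.repr u).sum (fun i c => c) = 0 := by
      have : s u = (b.repr u).sum (fun i c => c) := by
        simp [s, Finsupp.linearCombination_apply, Finsupp.sum, smul_eq_mul]
      rw [← this, hu]
    have h2 : (b.repr u).sum (fun i c => c • e i0) = 0 := by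
      rw [Finsupp.sum, ← Finset.sum_smul]
      rw [Finsupp.sum] at hsu
      rw [hsu, zero_smul]
    have hu' : u = (b.repr u).sum (fun i c => c • (e i - e i0)) := by
      have : (b.repr u).sum (fun i c => c • (e i - e i0)) =
          (b.repr u).sum (fun i c => c • e i) - (b.repr u).sum (fun i c => c • e i0) := by
        rw [Finsupp.sum, Finsupp.sum, Finsupp.sum, ← Finset.sum_sub_distrib]
        exact Finset.sum_congr rfl fun i _ => smul_sub _ _ _
      rw [this, h1, h2, sub_zero]
    rw [hu']
    refine Submodule.sum_mem _ fun i _ => Submodule.smul_mem _ _ ?_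
    rw [hZ]
    exact Submodule.subset_span ⟨i, rfl⟩
  have char : ∀ u : A, (u * u = u ∧ u ≠ 0) ↔ s u = 1 := by
    intro u
    constructor
    · rintro ⟨hid, hne⟩
      by_contra h
      apply hne
      have hne' : s u - 1 ≠ 0 := sub_ne_zero.mpr h
      have h0 : (s u - 1) • u = 0 := by
        rw [sub_smul, one_smul, ← square u, hid, sub_self]
      calc u = (s u - 1)⁻¹ • ((s u - 1) • u) := (inv_smul_smul₀ hne' u).symm
        _ = 0 := by rw [h0, smul_zero]
    · intro h
      have hne : u ≠ 0 := by
        intro h0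
        rw [h0, map_zero] at h
        exact one_ne_zero h.symm
      exact ⟨by rw [square u, h, one_smul], hne⟩
  constructor
  · ext u
    simp only [Set.mem_setOf_eq]
    rw [char u]
    constructor
    · intro h
      refine ⟨u - e i0, hker _ ?_, by abel⟩
      rw [map_sub, h, hse, sub_self]
    · rintro ⟨z, hz, rfl⟩
      rw [map_add, hse, hZ0 z hz, add_zero]
  · intro ν z hz
    rw [char]
    rw [map_add, map_smul, hse, hZ0 z hz, add_zero, smul_eq_mul, mul_one]
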